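/- arXiv:1603.09645 — 7 statements merged into one kernel-verified Lean document; each statement's English description precedes it below -/
import Mathlib

section
/- There is no group of order 24n − 2 with exactly three involutions. -/
/-- There is no group of order `24 n - 2` (with `n ≥ 1`) having exactly three involutions. -/
theorem no_group_card_24n_sub_two_with_three_involutions
    {G : Type*} [Group G] [Fintype G] (n : ℕ) (hn : 1 ≤ n)
    (hcard : Fintype.card G = 24 * n - 2) :
    Nat.card {g : G // orderOf g = 2} ≠ 3 := by
  intro h3
  haveI : Fact (Nat.Prime 2) := ⟨Nat.prime_two⟩
  have hG : Nat.card G = 24 * n - 2 := by rw [Nat.card_eq_fintype_card, hcard]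
  -- 2-adic valuation of |G| is 1
  have hfac : (Nat.card G).factorization 2 = 1 := by
    have h2 : 24 * n - 2 = 2 * (12 * n - 1) := by omega
    have hodd : ¬ 2 ∣ (12 * n - 1) := by omega
    rw [hG, h2, Nat.factorization_mul (by norm_num) (by omega)]
    simp [Nat.factorization_eq_zero_of_not_dvd hodd, Nat.Prime.factorization_self Nat.prime_two]
  -- map from involutions to Sylow 2-subgroups
  have hcardzp : ∀ g : G, orderOf g = 2 →
      Nat.card (Subgroup.zpowers g) = 2 ^ (Nat.card G).factorization 2 := by
    intro g hg
    rw [Nat.card_zpowers, hg, hfac, pow_one]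
  let f : {g : G // orderOf g = 2} → Sylow 2 G :=
    fun g => Sylow.ofCard (Subgroup.zpowers g.1) (hcardzp g.1 g.2)
  have hfbij : Function.Bijective f := by
    constructor
    · rintro ⟨g, hg⟩ ⟨g', hg'⟩ hgg'
      have : Subgroup.zpowers g = Subgroup.zpowers g' := by
        have := congrArg (fun P : Sylow 2 G => (P : Subgroup G)) hgg'
        simpa [f, Sylow.coe_ofCard] using this
      have hmem : g' ∈ Subgroup.zpowers g := this ▸ Subgroup.mem_zpowers g'
      -- zpowers g has order 2, so its elements are 1 and g
      have hcg : Nat.card (Subgroup.zpowers g) = 2 := by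
        rw [Nat.card_zpowers, hg]
      have : g' = 1 ∨ g' = g := by
        rcases hmem with ⟨k, hk⟩
        change g ^ k = g' at hk
        have hg2 : g ^ (2 : ℤ) = 1 := by
          have := pow_orderOf_eq_one g
          rw [hg] at this
          exact_mod_cast by simpa using this
        have hk2 : g ^ (k % 2 : ℤ) = g' := by
          conv_rhs => rw [← hk, ← Int.emod_add_mul_ediv k 2]
          rw [zpow_add, zpow_mul, hg2, one_zpow, mul_one]
        have hb : k % 2 = 0 ∨ k % 2 = 1 := by omega
        rcases hb with hb | hb
        · left; rw [hb] at hk2; simpa using hk2.symm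
        · right; rw [hb] at hk2; simpa using hk2.symm
      rcases this with h1 | h1
      · exfalso; rw [h1, orderOf_one] at hg'; omega
      · exact Subtype.ext h1.symm
    · intro P
      have hP : Nat.card (P : Subgroup G) = 2 := by
        rw [Sylow.card_eq_multiplicity, hfac, pow_one]
      obtain ⟨g, hg⟩ := exists_prime_orderOf_dvd_card' (G := (P : Subgroup G)) 2 (by rw [hP])
      have hgG : orderOf (g : G) = 2 := by rw [Subgroup.orderOf_coe, hg]
      refine ⟨⟨(g : G), hgG⟩, ?_⟩
      apply Sylow.ext
      rw [Sylow.coe_ofCard]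
      apply Subgroup.eq_of_le_of_card_ge
      · rw [Subgroup.zpowers_le]; exact g.2
      · rw [hP, Nat.card_zpowers, hgG]
  -- hence there are 3 Sylow 2-subgroups
  have hcardSyl : Nat.card (Sylow 2 G) = 3 := by
    rw [← Nat.card_eq_of_bijective f hfbij, h3]
  have hdvd : Nat.card (Sylow 2 G) ∣ Nat.card G := by
    obtain ⟨P⟩ := (inferInstance : Nonempty (Sylow 2 G))
    have h1 := Sylow.card_dvd_index P
    exact h1.trans (Subgroup.index_dvd_card _)
  rw [hcardSyl, hG] at hdvd
  omega
end

section
/- There is no group of order 24n + 10 with exactly three involutions. -/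
/-- There is no group of order `24 n + 10` having exactly three involutions. -/
theorem no_group_card_24n_add_ten_with_three_involutions
    {G : Type*} [Group G] [Fintype G] (n : ℕ)
    (hcard : Fintype.card G = 24 * n + 10) :
    Nat.card {g : G // orderOf g = 2} ≠ 3 := by
  have hG : Nat.card G = 24 * n + 10 := by
    rw [Nat.card_eq_fintype_card, hcard]
  have hp : Fact (Nat.Prime 2) := ⟨Nat.prime_two⟩
  have hG0 : Nat.card G ≠ 0 := Nat.card_pos.ne'
  -- the 2-adic valuation of |G| is 1
  have hfact : (Nat.card G).factorization 2 = 1 := by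
    have h1 : 1 ≤ (Nat.card G).factorization 2 := by
      rw [← Nat.Prime.pow_dvd_iff_le_factorization Nat.prime_two hG0, pow_one, hG]
      omega
    have h2 : ¬ 2 ≤ (Nat.card G).factorization 2 := by
      rw [← Nat.Prime.pow_dvd_iff_le_factorization Nat.prime_two hG0, hG]
      intro ⟨k, hk⟩
      omega
    omega
  -- the map sending an involution to the Sylow 2-subgroup it generates
  have hzp : ∀ x : {g : G // orderOf g = 2},
      Nat.card (Subgroup.zpowers x.1) = 2 ^ (Nat.card G).factorization 2 := by
    intro x
    rw [Nat.card_zpowers, x.2, hfact, pow_one]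
  let f : {g : G // orderOf g = 2} → Sylow 2 G :=
    fun x => Sylow.ofCard (Subgroup.zpowers x.1) (hzp x)
  have hf : Function.Bijective f := by
    constructor
    · intro x y hxy
      have hz : Subgroup.zpowers x.1 = Subgroup.zpowers y.1 := by
        have := congrArg (fun P : Sylow 2 G => (P : Subgroup G)) hxy
        simpa [f] using this
      have hx : x.1 ∈ Subgroup.zpowers y.1 := hz ▸ Subgroup.mem_zpowers x.1
      obtain ⟨k, hk⟩ := hx
      have hmod : x.1 = y.1 ^ (k % 2) := by
        rw [← hk, show (2:ℤ) = (orderOf y.1 : ℤ) by rw [y.2]; norm_num,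
          zpow_mod_orderOf]
      have : k % 2 = 0 ∨ k % 2 = 1 := by omega
      rcases this with h | h
      · rw [h] at hmod
        simp at hmod
        have := x.2
        rw [hmod] at this
        simp at this
      · rw [h] at hmod
        simp at hmod
        exact Subtype.ext hmod
    · intro P
      have hcardP : Nat.card P = 2 := by
        rw [Sylow.card_eq_multiplicity, hfact, pow_one]
      obtain ⟨y, hy⟩ := exists_prime_orderOf_dvd_card' (G := P) 2 (by rw [hcardP])
      have hy' : orderOf (y : G) = 2 := by rw [Subgroup.orderOf_coe, hy]
      refine ⟨⟨y.1, hy'⟩, ?_⟩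
      apply Sylow.ext
      show (Subgroup.zpowers (y : G)) = (P : Subgroup G)
      apply Subgroup.eq_of_le_of_card_ge
      · exact Subgroup.zpowers_le.mpr y.2
      · rw [hcardP, Nat.card_zpowers, hy']
  have hkey : Nat.card {g : G // orderOf g = 2} = Nat.card (Sylow 2 G) :=
    Nat.card_eq_of_bijective f hf
  intro h3
  rw [h3] at hkey
  obtain ⟨P⟩ : Nonempty (Sylow 2 G) := inferInstance
  have hdvd : Nat.card (Sylow 2 G) ∣ (P : Subgroup G).index := P.card_dvd_index
  rw [← hkey] at hdvd
  have hcardP : Nat.card P = 2 := by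
    rw [Sylow.card_eq_multiplicity, hfact, pow_one]
  have hcardP' : Nat.card (P : Subgroup G) = 2 := hcardP
  have hidx : (P : Subgroup G).index * Nat.card (P : Subgroup G) = Nat.card G :=
    Subgroup.index_mul_card _
  rw [hcardP', hG] at hidx
  obtain ⟨k, hk⟩ := hdvd
  omega
end

section
/- If a finite group G has a normal subgroup N of index 2 whose Sylow 2-subgroup is central in N, then N has a normal complement to its Sylow 2-subgroup, i.e., N has a normal subgroup of odd order whose index in N is the order of the Sylow 2-subgroup. -/
/-- If a finite group `G` has a normal subgroup `N` of index 2 whose Sylow 2-subgroup is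
central in `N`, then `N` has a normal complement to its Sylow 2-subgroup: a normal
subgroup of odd order trivially intersecting the Sylow 2-subgroup and generating `N`
together with it. -/
theorem normal_two_complement_of_central_sylow
    {G : Type*} [Group G] [Fintype G] (N : Subgroup G) [N.Normal] (hN : N.index = 2)
    (P : Sylow 2 ↥N) (hP : (P : Subgroup ↥N) ≤ Subgroup.center ↥N) :
    ∃ O : Subgroup ↥N, O.Normal ∧ Odd (Nat.card O) ∧
      O ⊓ (P : Subgroup ↥N) = ⊥ ∧ O ⊔ (P : Subgroup ↥N) = ⊤ := by
  haveI : Fact (Nat.Prime 2) := ⟨Nat.prime_two⟩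
  have hP' : Subgroup.normalizer (P : Set ↥N) ≤ Subgroup.centralizer (P : Set ↥N) := by
    intro x _
    exact Subgroup.centralizer_eq_top_iff_subset.mpr hP ▸ Subgroup.mem_top x
  refine ⟨(MonoidHom.transferSylow P hP').ker, (MonoidHom.transferSylow P hP').normal_ker,
    ?_, ?_, ?_⟩
  · have h2 := MonoidHom.not_dvd_card_ker_transferSylow P hP'
    rcases Nat.even_or_odd (Nat.card (MonoidHom.transferSylow P hP').ker) with he | ho
    · exact absurd he.two_dvd h2
    · exact ho
  · exact (MonoidHom.ker_transferSylow_isComplement' P hP').disjoint.eq_bot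
  · exact (MonoidHom.ker_transferSylow_isComplement' P hP').sup_eq_top
end

section
/- The set F = {{(0,0),(1,i),(1,−i)} : 1 ≤ i ≤ n} is a difference family in Z3 × Z_{2n+1} relative to the subgroup Z3 × {0}: the differences of elements within blocks of F cover every element of Z3 × Z_{2n+1} outside Z3 × {0} exactly once. -/
lemma aux_inj (n : ℕ) {i j : ℕ} (hi1 : 1 ≤ i) (hi2 : i ≤ n) (hj1 : 1 ≤ j) (hj2 : j ≤ n)
    (h : (i : ZMod (2*n+1)) = j) : i = j := by
  have := (ZMod.natCast_eq_natCast_iff' i j (2*n+1)).mp h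
  rwa [Nat.mod_eq_of_lt (by omega), Nat.mod_eq_of_lt (by omega)] at this

lemma aux_ne_neg (n : ℕ) {i j : ℕ} (hi1 : 1 ≤ i) (hi2 : i ≤ n) (hj1 : 1 ≤ j) (hj2 : j ≤ n) :
    (i : ZMod (2*n+1)) ≠ -(j : ℕ) := by
  intro h
  have h2 : ((i + j : ℕ) : ZMod (2*n+1)) = 0 := by push_cast; rw [h]; ring
  rw [ZMod.natCast_eq_zero_iff] at h2
  have := Nat.le_of_dvd (by omega) h2
  omega

lemma aux_ne_zero (n : ℕ) {i : ℕ} (hi1 : 1 ≤ i) (hi2 : i ≤ n) :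
    (i : ZMod (2*n+1)) ≠ 0 := by
  intro h
  rw [ZMod.natCast_eq_zero_iff] at h
  have := Nat.le_of_dvd (by omega) h
  omega

lemma two_inj (n : ℕ) {x y : ZMod (2*n+1)} (h : 2 * x = 2 * y) : x = y := by
  have h1 : (2 : ZMod (2*n+1)) * ((n:ZMod (2*n+1))+1) = 1 := by
    have h0 : ((2*n+1 : ℕ) : ZMod (2*n+1)) = 0 := ZMod.natCast_self _
    push_cast at h0
    linear_combination h0
  linear_combination ((n : ZMod (2*n+1))+1) * h - (x - y) * h1

lemma index_exists (n : ℕ) (b : ZMod (2*n+1)) (hb : b ≠ 0) :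
    ∃ i : ℕ, 1 ≤ i ∧ i ≤ n ∧ ((i : ZMod (2*n+1)) = b ∨ (i : ZMod (2*n+1)) = -b) := by
  have hm : ((b.val : ℕ) : ZMod (2*n+1)) = b := ZMod.natCast_zmod_val b
  have hlt : b.val < 2*n+1 := ZMod.val_lt b
  have hne : b.val ≠ 0 := fun h => hb (by rw [← hm, h, Nat.cast_zero])
  by_cases hle : b.val ≤ n
  · exact ⟨b.val, by omega, hle, Or.inl hm⟩
  · refine ⟨2*n+1 - b.val, by omega, by omega, Or.inr ?_⟩
    have : ((2*n+1 - b.val : ℕ) : ZMod (2*n+1)) = ((2*n+1 : ℕ) : ZMod (2*n+1)) - b.val := by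
      rw [Nat.cast_sub (by omega)]
    rw [this, ZMod.natCast_self, hm, zero_sub]

lemma index_unique (n : ℕ) {i j : ℕ} {b : ZMod (2*n+1)} (hi1 : 1 ≤ i) (hi2 : i ≤ n)
    (hj1 : 1 ≤ j) (hj2 : j ≤ n)
    (hib : (i : ZMod (2*n+1)) = b ∨ (i : ZMod (2*n+1)) = -b)
    (hjb : (j : ZMod (2*n+1)) = b ∨ (j : ZMod (2*n+1)) = -b) : j = i := by
  rcases hib with h1|h1 <;> rcases hjb with h2|h2
  · exact aux_inj n hj1 hj2 hi1 hi2 (h2.trans h1.symm)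
  · exact absurd (show (j : ZMod (2*n+1)) = -(i:ℕ) by push_cast; linear_combination h2 + h1)
      (aux_ne_neg n hj1 hj2 hi1 hi2)
  · exact absurd (show (j : ZMod (2*n+1)) = -(i:ℕ) by push_cast; linear_combination h2 + h1)
      (aux_ne_neg n hj1 hj2 hi1 hi2)
  · exact aux_inj n hj1 hj2 hi1 hi2 (by linear_combination h2 - h1)


/-- The family of blocks `B_i = {(0,0), (1,i), (1,-i)}`, `1 ≤ i ≤ n`, is a difference
family in `ℤ₃ × ℤ_{2n+1}` relative to the subgroup `ℤ₃ × {0}`: every element outside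
`ℤ₃ × {0}` arises exactly once as a difference of distinct elements of a block, and
no element of `ℤ₃ × {0}` so arises. -/
theorem difference_family_Z3_Z2n1 (n : ℕ) :
    ∀ g : ZMod 3 × ZMod (2 * n + 1),
      (g.2 ≠ 0 →
        ∃! p : ℕ × (ZMod 3 × ZMod (2 * n + 1)) × (ZMod 3 × ZMod (2 * n + 1)),
          p.1 ∈ Finset.Icc 1 n ∧
          p.2.1 ∈ ({((0 : ZMod 3), (0 : ZMod (2 * n + 1))),
                     (1, (p.1 : ZMod (2 * n + 1))), (1, -(p.1 : ZMod (2 * n + 1)))} :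
                    Set (ZMod 3 × ZMod (2 * n + 1))) ∧
          p.2.2 ∈ ({((0 : ZMod 3), (0 : ZMod (2 * n + 1))),
                     (1, (p.1 : ZMod (2 * n + 1))), (1, -(p.1 : ZMod (2 * n + 1)))} :
                    Set (ZMod 3 × ZMod (2 * n + 1))) ∧
          p.2.1 ≠ p.2.2 ∧ p.2.1 - p.2.2 = g) ∧
      (g.2 = 0 →
        ¬ ∃ p : ℕ × (ZMod 3 × ZMod (2 * n + 1)) × (ZMod 3 × ZMod (2 * n + 1)),
          p.1 ∈ Finset.Icc 1 n ∧
          p.2.1 ∈ ({((0 : ZMod 3), (0 : ZMod (2 * n + 1))),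
                     (1, (p.1 : ZMod (2 * n + 1))), (1, -(p.1 : ZMod (2 * n + 1)))} :
                    Set (ZMod 3 × ZMod (2 * n + 1))) ∧
          p.2.2 ∈ ({((0 : ZMod 3), (0 : ZMod (2 * n + 1))),
                     (1, (p.1 : ZMod (2 * n + 1))), (1, -(p.1 : ZMod (2 * n + 1)))} :
                    Set (ZMod 3 × ZMod (2 * n + 1))) ∧
          p.2.1 ≠ p.2.2 ∧ p.2.1 - p.2.2 = g) := by
  rintro ⟨a, b⟩
  constructor
  · intro hb0
    replace hb0 : b ≠ 0 := hb0
    have ha3 : a = 0 ∨ a = 1 ∨ a = 2 :=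
      (by decide : ∀ a : ZMod 3, a = 0 ∨ a = 1 ∨ a = 2) a
    rcases ha3 with ha|ha|ha <;> subst ha
    · -- a = 0
      have h1 : (2 : ZMod (2*n+1)) * ((n : ZMod (2*n+1)) + 1) = 1 := by
        have h0 : ((2*n+1 : ℕ) : ZMod (2*n+1)) = 0 := ZMod.natCast_self _
        push_cast at h0
        linear_combination h0
      set b' : ZMod (2*n+1) := ((n : ZMod (2*n+1)) + 1) * b with hb'def
      have h2b' : 2 * b' = b := by rw [hb'def]; linear_combination b * h1
      have hb'ne : b' ≠ 0 := fun h => hb0 (by rw [← h2b', h, mul_zero])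
      obtain ⟨i, hi1, hi2, hib⟩ := index_exists n b' hb'ne
      refine ⟨(i, (1, b'), (1, -b')), ⟨Finset.mem_Icc.2 ⟨hi1, hi2⟩, ?_, ?_, ?_, ?_⟩, ?_⟩
      · simp only [Set.mem_insert_iff, Set.mem_singleton_iff]
        rcases hib with h|h
        · exact Or.inr (Or.inl (by rw [h]))
        · refine Or.inr (Or.inr ?_)
          rw [Prod.mk.injEq]
          exact ⟨rfl, by linear_combination h⟩
      · simp only [Set.mem_insert_iff, Set.mem_singleton_iff]
        rcases hib with h|h
        · refine Or.inr (Or.inr ?_)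
          rw [Prod.mk.injEq]
          exact ⟨rfl, by linear_combination h⟩
        · exact Or.inr (Or.inl (by rw [Prod.mk.injEq]; exact ⟨rfl, by linear_combination -h⟩))
      · intro h
        have h2 : b' = -b' := congrArg Prod.snd h
        exact hb0 (by linear_combination h2 - h2b')
      · simp only [Prod.mk_sub_mk, Prod.mk.injEq]
        exact ⟨by ring, by linear_combination h2b'⟩
      · rintro ⟨j, x, y⟩ ⟨hjI, hx, hy, hne, hd⟩
        rw [Finset.mem_Icc] at hjI
        simp only [Set.mem_insert_iff, Set.mem_singleton_iff] at hx hy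
        rcases hx with rfl|rfl|rfl <;> rcases hy with rfl|rfl|rfl <;>
            first
              | exact absurd rfl hne
              | (rw [Prod.mk_sub_mk, Prod.mk.injEq] at hd
                 obtain ⟨hd1, hd2⟩ := hd
                 first
                   | exact absurd hd1 (by decide)
                   | skip)
        · -- x = (1, j), y = (1, -j)
          have hjb : (j : ZMod (2*n+1)) = b' :=
            two_inj n (by linear_combination hd2 - h2b')
          obtain rfl := index_unique n hi1 hi2 hjI.1 hjI.2 hib (Or.inl hjb)
          rw [hjb]
        · -- x = (1, -j), y = (1, j)
          have hjb : (j : ZMod (2*n+1)) = -b' := by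
            have := two_inj n (show 2 * (-(j : ZMod (2*n+1))) = 2 * b' by
              linear_combination hd2 - h2b')
            linear_combination -this
          obtain rfl := index_unique n hi1 hi2 hjI.1 hjI.2 hib (Or.inr hjb)
          rw [hjb, neg_neg]
    · -- a = 1
      obtain ⟨i, hi1, hi2, hib⟩ := index_exists n b hb0
      refine ⟨(i, (1, b), (0, 0)), ⟨Finset.mem_Icc.2 ⟨hi1, hi2⟩, ?_, ?_, ?_, ?_⟩, ?_⟩
      · simp only [Set.mem_insert_iff, Set.mem_singleton_iff]
        rcases hib with h|h
        · exact Or.inr (Or.inl (by rw [h]))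
        · refine Or.inr (Or.inr ?_)
          rw [Prod.mk.injEq]
          exact ⟨rfl, by linear_combination h⟩
      · exact Or.inl rfl
      · intro h
        exact one_ne_zero (congrArg Prod.fst h)
      · simp only [Prod.mk_sub_mk, Prod.mk.injEq]
        exact ⟨by ring, by ring⟩
      · rintro ⟨j, x, y⟩ ⟨hjI, hx, hy, hne, hd⟩
        rw [Finset.mem_Icc] at hjI
        simp only [Set.mem_insert_iff, Set.mem_singleton_iff] at hx hy
        rcases hx with rfl|rfl|rfl <;> rcases hy with rfl|rfl|rfl <;>
            first
              | exact absurd rfl hne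
              | (rw [Prod.mk_sub_mk, Prod.mk.injEq] at hd
                 obtain ⟨hd1, hd2⟩ := hd
                 first
                   | exact absurd hd1 (by decide)
                   | skip)
        · -- x = (1, j), y = (0, 0)
          have hjb : (j : ZMod (2*n+1)) = b := by linear_combination hd2
          obtain rfl := index_unique n hi1 hi2 hjI.1 hjI.2 hib (Or.inl hjb)
          rw [hjb]
        · -- x = (1, -j), y = (0, 0)
          have hjb : (j : ZMod (2*n+1)) = -b := by linear_combination -hd2
          obtain rfl := index_unique n hi1 hi2 hjI.1 hjI.2 hib (Or.inr hjb)
          have h' : -(j : ZMod (2*n+1)) = b := by linear_combination hd2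
          rw [h']
    · -- a = 2
      obtain ⟨i, hi1, hi2, hib⟩ := index_exists n b hb0
      refine ⟨(i, (0, 0), (1, -b)), ⟨Finset.mem_Icc.2 ⟨hi1, hi2⟩, ?_, ?_, ?_, ?_⟩, ?_⟩
      · exact Or.inl rfl
      · simp only [Set.mem_insert_iff, Set.mem_singleton_iff]
        rcases hib with h|h
        · refine Or.inr (Or.inr ?_)
          rw [Prod.mk.injEq]
          exact ⟨rfl, by rw [h]⟩
        · refine Or.inr (Or.inl ?_)
          rw [Prod.mk.injEq]
          exact ⟨rfl, by linear_combination -h⟩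
      · intro h
        exact one_ne_zero (congrArg Prod.fst h).symm
      · simp only [Prod.mk_sub_mk, Prod.mk.injEq]
        exact ⟨by decide, by ring⟩
      · rintro ⟨j, x, y⟩ ⟨hjI, hx, hy, hne, hd⟩
        rw [Finset.mem_Icc] at hjI
        simp only [Set.mem_insert_iff, Set.mem_singleton_iff] at hx hy
        rcases hx with rfl|rfl|rfl <;> rcases hy with rfl|rfl|rfl <;>
            first
              | exact absurd rfl hne
              | (rw [Prod.mk_sub_mk, Prod.mk.injEq] at hd
                 obtain ⟨hd1, hd2⟩ := hd
                 first
                   | exact absurd hd1 (by decide)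
                   | skip)
        · -- x = (0, 0), y = (1, j)
          have hjb : (j : ZMod (2*n+1)) = -b := by linear_combination -hd2
          obtain rfl := index_unique n hi1 hi2 hjI.1 hjI.2 hib (Or.inr hjb)
          rw [hjb]
        · -- x = (0, 0), y = (1, -j)
          have hjb : (j : ZMod (2*n+1)) = b := by linear_combination hd2
          obtain rfl := index_unique n hi1 hi2 hjI.1 hjI.2 hib (Or.inl hjb)
          rw [hjb]
  · intro hb0
    replace hb0 : b = 0 := hb0
    subst hb0
    rintro ⟨⟨j, x, y⟩, hjI, hx, hy, hne, hd⟩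
    rw [Finset.mem_Icc] at hjI
    simp only [Set.mem_insert_iff, Set.mem_singleton_iff] at hx hy
    rcases hx with rfl|rfl|rfl <;> rcases hy with rfl|rfl|rfl <;>
        first
          | exact absurd rfl hne
          | (rw [Prod.mk_sub_mk, Prod.mk.injEq] at hd
             obtain ⟨hd1, hd2⟩ := hd
             first
               | exact aux_ne_zero n hjI.1 hjI.2 (by linear_combination hd2)
               | exact aux_ne_zero n hjI.1 hjI.2 (by linear_combination -hd2)
               | exact aux_ne_zero n hjI.1 hjI.2 (two_inj n
                   (show (2 : ZMod (2*n+1)) * j = 2 * 0 by linear_combination hd2))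
               | exact aux_ne_zero n hjI.1 hjI.2 (two_inj n
                   (show (2 : ZMod (2*n+1)) * j = 2 * 0 by linear_combination -hd2)))
end

section
/- For every even n ≥ 2 there exists a set of 2n−1 triples in Z_{12n} whose pairwise differences cover Z_{12n} \ {0, 3n, 4n, 6n, 8n, 9n} exactly once (a (Z_{12n}, {3,4}, 3, 1)-difference family). -/
set_option maxHeartbeats 1600000

/- Auxiliary construction: for i < 2*n-1, the block is {0, dfA n i, dfC n i} in ZMod (12n).
   The families (0-indexed):
   i=0: (1, 3n-1) ; i=1: (3, 6n+1) ; i=2: (2n-2, 5n-1)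
   3 ≤ i ≤ n, t=i-3: (2n-1-2t, 4n-1-t)
   n+1 ≤ i ≤ 2n-2, t=i-n-1: (2n-4-2t, 6n-3-t) -/

def dfA (n i : ℕ) : ℕ :=
  if i = 0 then 1 else if i = 1 then 3 else if i = 2 then 2*n-2
  else if i ≤ n then 2*n-1-2*(i-3) else 2*n-4-2*(i-n-1)

def dfC (n i : ℕ) : ℕ :=
  if i = 0 then 3*n-1 else if i = 1 then 6*n+1 else if i = 2 then 5*n-1
  else if i ≤ n then 4*n-1-(i-3) else 6*n-3-(i-n-1)

/-- The six difference values of block i, indexed by j < 6. -/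
def dval (n i j : ℕ) : ℕ :=
  if j = 0 then dfA n i else if j = 1 then dfC n i - dfA n i
  else if j = 2 then dfC n i else if j = 3 then 12*n - dfA n i
  else if j = 4 then 12*n - (dfC n i - dfA n i) else 12*n - dfC n i

lemma df_cases (n i : ℕ) (hn : 2 ≤ n) (hi : i < 2*n-1) :
    (i = 0 ∧ dfA n i = 1 ∧ dfC n i = 3*n-1) ∨
    (i = 1 ∧ dfA n i = 3 ∧ dfC n i = 6*n+1) ∨
    (i = 2 ∧ dfA n i = 2*n-2 ∧ dfC n i = 5*n-1) ∨
    (3 ≤ i ∧ i ≤ n ∧ dfA n i = 2*n-1-2*(i-3) ∧ dfC n i = 4*n-1-(i-3)) ∨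
    (n+1 ≤ i ∧ i ≤ 2*n-2 ∧ dfA n i = 2*n-4-2*(i-n-1) ∧ dfC n i = 6*n-3-(i-n-1)) := by
  unfold dfA dfC; split_ifs <;> omega

lemma dval_eval0 (n i : ℕ) : dval n i 0 = dfA n i := rfl
lemma dval_eval1 (n i : ℕ) : dval n i 1 = dfC n i - dfA n i := rfl
lemma dval_eval2 (n i : ℕ) : dval n i 2 = dfC n i := rfl
lemma dval_eval3 (n i : ℕ) : dval n i 3 = 12*n - dfA n i := rfl
lemma dval_eval4 (n i : ℕ) : dval n i 4 = 12*n - (dfC n i - dfA n i) := rfl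
lemma dval_eval5 (n i : ℕ) : dval n i 5 = 12*n - dfC n i := rfl

lemma dval_high (n i : ℕ) {j : ℕ} (h3 : 3 ≤ j) (h6 : j < 6) :
    dval n i j = 12*n - dval n i (j-3) := by
  interval_cases j <;> rfl

lemma df_range (n i : ℕ) (hn : 2 ≤ n) (hi : i < 2*n-1) :
    1 ≤ dfA n i ∧ dfA n i < dfC n i ∧ dfC n i < 12*n := by
  have := df_cases n i hn hi; omega

lemma dval_range (n i j : ℕ) (hn : 2 ≤ n) (hi : i < 2*n-1) (hj : j < 6) :
    1 ≤ dval n i j ∧ dval n i j < 12*n ∧ dval n i j ≠ 3*n ∧ dval n i j ≠ 4*n ∧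
    dval n i j ≠ 6*n ∧ dval n i j ≠ 8*n ∧ dval n i j ≠ 9*n := by
  have := df_cases n i hn hi
  interval_cases j <;>
    simp only [dval_eval0, dval_eval1, dval_eval2, dval_eval3, dval_eval4, dval_eval5] <;>
    omega

lemma erange (n i : ℕ) (hn : 2 ≤ n) (hi : i < 2*n-1) {k : ℕ} (hk : k < 3) :
    1 ≤ dval n i k ∧ dval n i k ≤ 6*n+1 ∧ dval n i k ≠ 6*n ∧ dval n i k ≠ 6*n-1 := by
  have := df_cases n i hn hi
  interval_cases k <;> simp only [dval_eval0, dval_eval1, dval_eval2] <;> omega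

lemma einj (n : ℕ) (hn : 2 ≤ n) {i i' k k' : ℕ} (hi : i < 2*n-1) (hi' : i' < 2*n-1)
    (hk : k < 3) (hk' : k' < 3) (h : dval n i k = dval n i' k') : i = i' ∧ k = k' := by
  have d := df_cases n i hn hi; have d' := df_cases n i' hn hi'
  interval_cases k <;> interval_cases k' <;>
    simp only [dval_eval0, dval_eval1, dval_eval2] at h <;> omega

lemma dval_inj (n : ℕ) (hn : 2 ≤ n) {i i' j j' : ℕ} (hi : i < 2*n-1) (hi' : i' < 2*n-1)
    (hj : j < 6) (hj' : j' < 6) (h : dval n i j = dval n i' j') : i = i' ∧ j = j' := by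
  rcases Nat.lt_or_ge j 3 with h3 | h3 <;> rcases Nat.lt_or_ge j' 3 with h3' | h3'
  · exact einj n hn hi hi' h3 h3' h
  · rw [dval_high n i' h3' hj'] at h
    have r := erange n i hn hi h3
    have r' := erange n i' hn hi' (k := j'-3) (by omega)
    omega
  · rw [dval_high n i h3 hj] at h
    have r := erange n i hn hi (k := j-3) (by omega)
    have r' := erange n i' hn hi' h3'
    omega
  · rw [dval_high n i h3 hj, dval_high n i' h3' hj'] at h
    have r := erange n i hn hi (k := j-3) (by omega)
    have r' := erange n i' hn hi' (k := j'-3) (by omega)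
    have heq : dval n i (j-3) = dval n i' (j'-3) := by omega
    have := einj n hn hi hi' (k := j-3) (k' := j'-3) (by omega) (by omega) heq
    omega

lemma dval_flip (n i j : ℕ) (hn : 2 ≤ n) (hi : i < 2*n-1) (hj : j < 6) :
    dval n i ((j+3) % 6) = 12*n - dval n i j := by
  rcases Nat.lt_or_ge j 3 with h | h
  · have e1 : (j+3) % 6 = j+3 := by omega
    have e2 : j+3-3 = j := by omega
    rw [e1, dval_high n i (by omega) (by omega), e2]
  · have e1 : (j+3) % 6 = j-3 := by omega
    have h2 := dval_high n i h hj
    have h3 := (dval_range n i (j-3) hn hi (by omega)).2.1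
    rw [e1]; omega

lemma cover_low (n : ℕ) (hn : 2 ≤ n) {g : ℕ} (h1 : 1 ≤ g) (h2 : g ≤ 6*n-1)
    (h3 : g ≠ 3*n) (h4 : g ≠ 4*n) :
    ∃ i j, i < 2*n-1 ∧ j < 6 ∧ dval n i j = g := by
  by_cases e1 : g = 1
  · refine ⟨0, 0, by omega, by omega, ?_⟩
    rw [dval_eval0]; have := df_cases n 0 hn (by omega); omega
  by_cases e2 : g = 3
  · refine ⟨1, 0, by omega, by omega, ?_⟩
    rw [dval_eval0]; have := df_cases n 1 hn (by omega); omega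
  by_cases e3 : g = 2*n-2
  · refine ⟨2, 0, by omega, by omega, ?_⟩
    rw [dval_eval0]; have := df_cases n 2 hn (by omega); omega
  by_cases e4 : g % 2 = 1 ∧ 5 ≤ g ∧ g ≤ 2*n-1
  · refine ⟨3+(2*n-1-g)/2, 0, by omega, by omega, ?_⟩
    rw [dval_eval0]; have := df_cases n (3+(2*n-1-g)/2) hn (by omega); omega
  by_cases e5 : g % 2 = 0 ∧ 2 ≤ g ∧ g ≤ 2*n-4
  · refine ⟨n+1+(2*n-4-g)/2, 0, by omega, by omega, ?_⟩
    rw [dval_eval0]; have := df_cases n (n+1+(2*n-4-g)/2) hn (by omega); omega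
  by_cases e6 : 2*n ≤ g ∧ g ≤ 3*n-3
  · refine ⟨3+(g-2*n), 1, by omega, by omega, ?_⟩
    rw [dval_eval1]; have := df_cases n (3+(g-2*n)) hn (by omega); omega
  by_cases e7 : g = 3*n-2
  · refine ⟨0, 1, by omega, by omega, ?_⟩
    rw [dval_eval1]; have := df_cases n 0 hn (by omega); omega
  by_cases e8 : g = 3*n-1
  · refine ⟨0, 2, by omega, by omega, ?_⟩
    rw [dval_eval2]; have := df_cases n 0 hn (by omega); omega
  by_cases e9 : g = 3*n+1
  · refine ⟨2, 1, by omega, by omega, ?_⟩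
    rw [dval_eval1]; have := df_cases n 2 hn (by omega); omega
  by_cases e10 : 3*n+2 ≤ g ∧ g ≤ 4*n-1
  · refine ⟨3+(4*n-1-g), 2, by omega, by omega, ?_⟩
    rw [dval_eval2]; have := df_cases n (3+(4*n-1-g)) hn (by omega); omega
  by_cases e11 : 4*n+1 ≤ g ∧ g ≤ 5*n-2
  · refine ⟨n+1+(g-(4*n+1)), 1, by omega, by omega, ?_⟩
    rw [dval_eval1]; have := df_cases n (n+1+(g-(4*n+1))) hn (by omega); omega
  by_cases e12 : g = 5*n-1
  · refine ⟨2, 2, by omega, by omega, ?_⟩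
    rw [dval_eval2]; have := df_cases n 2 hn (by omega); omega
  by_cases e13 : 5*n ≤ g ∧ g ≤ 6*n-3
  · refine ⟨n+1+(6*n-3-g), 2, by omega, by omega, ?_⟩
    rw [dval_eval2]; have := df_cases n (n+1+(6*n-3-g)) hn (by omega); omega
  by_cases e14 : g = 6*n-2
  · refine ⟨1, 1, by omega, by omega, ?_⟩
    rw [dval_eval1]; have := df_cases n 1 hn (by omega); omega
  by_cases e15 : g = 6*n-1
  · refine ⟨1, 5, by omega, by omega, ?_⟩
    rw [dval_eval5]; have := df_cases n 1 hn (by omega); omega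
  exfalso; omega

lemma dval_cover (n : ℕ) (hn : 2 ≤ n) {g : ℕ} (h1 : 1 ≤ g) (h2 : g < 12*n)
    (h3 : g ≠ 3*n) (h4 : g ≠ 4*n) (h5 : g ≠ 6*n) (h6 : g ≠ 8*n) (h7 : g ≠ 9*n) :
    ∃ i j, i < 2*n-1 ∧ j < 6 ∧ dval n i j = g := by
  rcases le_or_gt g (6*n-1) with hg | hg
  · exact cover_low n hn h1 hg h3 h4
  · obtain ⟨i, j, hi, hj, hd⟩ :=
      cover_low n hn (g := 12*n - g) (by omega) (by omega) (by omega) (by omega)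
    refine ⟨i, (j+3) % 6, hi, by omega, ?_⟩
    rw [dval_flip n i j hn hi hj, hd]; omega

/-- The ordered pair of block elements realizing difference `dval n i j`. -/
def dpair (n i j : ℕ) : ZMod (12*n) × ZMod (12*n) :=
  if j = 0 then ((dfA n i : ZMod (12*n)), 0)
  else if j = 1 then ((dfC n i : ZMod (12*n)), (dfA n i : ZMod (12*n)))
  else if j = 2 then ((dfC n i : ZMod (12*n)), 0)
  else if j = 3 then (0, (dfA n i : ZMod (12*n)))
  else if j = 4 then ((dfA n i : ZMod (12*n)), (dfC n i : ZMod (12*n)))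
  else (0, (dfC n i : ZMod (12*n)))

def dblock (n i : ℕ) : Finset (ZMod (12*n)) :=
  {0, (dfA n i : ZMod (12*n)), (dfC n i : ZMod (12*n))}

section
variable {n : ℕ}

lemma cast_inj_aux (hn : 2 ≤ n) {a b : ℕ} (ha : a < 12*n) (hb : b < 12*n)
    (h : (a : ZMod (12*n)) = b) : a = b := by
  haveI : NeZero (12*n) := ⟨by omega⟩
  have h2 := congrArg ZMod.val h
  rwa [ZMod.val_cast_of_lt ha, ZMod.val_cast_of_lt hb] at h2

lemma cast_sub_aux {a b : ℕ} (hba : b ≤ a) :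
    (a : ZMod (12*n)) - b = ((a - b : ℕ) : ZMod (12*n)) := by
  have : ((a - b : ℕ) : ZMod (12*n)) = (a : ZMod (12*n)) - b := by
    push_cast [Nat.cast_sub hba]; ring
  exact this.symm

lemma cast_neg_aux {a : ℕ} (ha : a ≤ 12*n) :
    (0 : ZMod (12*n)) - a = ((12*n - a : ℕ) : ZMod (12*n)) := by
  have h := cast_sub_aux (n := n) ha
  rwa [show ((12*n : ℕ) : ZMod (12*n)) = 0 from by
    exact_mod_cast ZMod.natCast_self (12*n)] at h

lemma dblock_ne (hn : 2 ≤ n) {i : ℕ} (hi : i < 2*n-1) :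
    (dfA n i : ZMod (12*n)) ≠ 0 ∧ (dfC n i : ZMod (12*n)) ≠ 0 ∧
    (dfA n i : ZMod (12*n)) ≠ (dfC n i : ZMod (12*n)) := by
  obtain ⟨h1, h2, h3⟩ := df_range n i hn hi
  refine ⟨fun h => ?_, fun h => ?_, fun h => ?_⟩
  · have := cast_inj_aux hn (by omega) (by omega) (h.trans (Nat.cast_zero).symm)
    omega
  · have := cast_inj_aux hn (by omega) (by omega) (h.trans (Nat.cast_zero).symm)
    omega
  · have := cast_inj_aux hn (by omega) (by omega) h
    omega

lemma dblock_card (hn : 2 ≤ n) {i : ℕ} (hi : i < 2*n-1) : (dblock n i).card = 3 := by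
  obtain ⟨n1, n2, n3⟩ := dblock_ne hn hi
  have h0 : (0 : ZMod (12*n)) ∉
      ({(dfA n i : ZMod (12*n)), (dfC n i : ZMod (12*n))} : Finset (ZMod (12*n))) := by
    intro h
    rcases Finset.mem_insert.1 h with h | h
    · exact n1 h.symm
    · exact n2 (Finset.mem_singleton.1 h).symm
  have hA : (dfA n i : ZMod (12*n)) ∉ ({(dfC n i : ZMod (12*n))} : Finset (ZMod (12*n))) := by
    intro h; exact n3 (Finset.mem_singleton.1 h)
  rw [dblock, Finset.card_insert_of_notMem h0, Finset.card_insert_of_notMem hA,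
    Finset.card_singleton]

lemma mem0_dblock (i : ℕ) : (0 : ZMod (12*n)) ∈ dblock n i :=
  Finset.mem_insert_self _ _

lemma memA_dblock (i : ℕ) : (dfA n i : ZMod (12*n)) ∈ dblock n i :=
  Finset.mem_insert_of_mem (Finset.mem_insert_self _ _)

lemma memC_dblock (i : ℕ) : (dfC n i : ZMod (12*n)) ∈ dblock n i :=
  Finset.mem_insert_of_mem (Finset.mem_insert_of_mem (Finset.mem_singleton_self _))

lemma dpair_spec (hn : 2 ≤ n) {i j : ℕ} (hi : i < 2*n-1) (hj : j < 6) :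
    (dpair n i j).1 ∈ dblock n i ∧ (dpair n i j).2 ∈ dblock n i ∧
    (dpair n i j).1 ≠ (dpair n i j).2 ∧
    (dpair n i j).1 - (dpair n i j).2 = ((dval n i j : ℕ) : ZMod (12*n)) := by
  obtain ⟨h1, h2, h3⟩ := df_range n i hn hi
  obtain ⟨n1, n2, n3⟩ := dblock_ne hn hi
  interval_cases j
  · refine ⟨memA_dblock i, mem0_dblock i, n1, ?_⟩
    show (dfA n i : ZMod (12*n)) - 0 = ((dfA n i : ℕ) : ZMod (12*n))
    rw [sub_zero]
  · refine ⟨memC_dblock i, memA_dblock i, Ne.symm n3, ?_⟩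
    show (dfC n i : ZMod (12*n)) - (dfA n i : ZMod (12*n))
        = ((dfC n i - dfA n i : ℕ) : ZMod (12*n))
    exact cast_sub_aux (by omega)
  · refine ⟨memC_dblock i, mem0_dblock i, n2, ?_⟩
    show (dfC n i : ZMod (12*n)) - 0 = ((dfC n i : ℕ) : ZMod (12*n))
    rw [sub_zero]
  · refine ⟨mem0_dblock i, memA_dblock i, Ne.symm n1, ?_⟩
    show (0 : ZMod (12*n)) - (dfA n i : ZMod (12*n)) = ((12*n - dfA n i : ℕ) : ZMod (12*n))
    exact cast_neg_aux (by omega)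
  · refine ⟨memA_dblock i, memC_dblock i, n3, ?_⟩
    show (dfA n i : ZMod (12*n)) - (dfC n i : ZMod (12*n))
        = ((12*n - (dfC n i - dfA n i) : ℕ) : ZMod (12*n))
    rw [show (dfA n i : ZMod (12*n)) - (dfC n i : ZMod (12*n))
        = 0 - ((dfC n i : ZMod (12*n)) - (dfA n i : ZMod (12*n))) from by ring,
      cast_sub_aux (by omega), cast_neg_aux (by omega)]
  · refine ⟨mem0_dblock i, memC_dblock i, Ne.symm n2, ?_⟩
    show (0 : ZMod (12*n)) - (dfC n i : ZMod (12*n)) = ((12*n - dfC n i : ℕ) : ZMod (12*n))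
    exact cast_neg_aux (by omega)

lemma dblock_decomp {i : ℕ} {x y : ZMod (12*n)}
    (hx : x ∈ dblock n i) (hy : y ∈ dblock n i) (hne : x ≠ y) :
    ∃ j, j < 6 ∧ (x, y) = dpair n i j := by
  simp only [dblock, Finset.mem_insert, Finset.mem_singleton] at hx hy
  rcases hx with h | h | h <;> rcases hy with h' | h' | h'
  · exact absurd (h.trans h'.symm) hne
  · exact ⟨3, by omega, by rw [h, h']; rfl⟩
  · exact ⟨5, by omega, by rw [h, h']; rfl⟩
  · exact ⟨0, by omega, by rw [h, h']; rfl⟩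
  · exact absurd (h.trans h'.symm) hne
  · exact ⟨4, by omega, by rw [h, h']; rfl⟩
  · exact ⟨2, by omega, by rw [h, h']; rfl⟩
  · exact ⟨1, by omega, by rw [h, h']; rfl⟩
  · exact absurd (h.trans h'.symm) hne

end

/-- For every even `n ≥ 2` there exists a `(ℤ_{12n}, {3,4}, 3, 1)` difference family:
`2n - 1` blocks of size 3 in `ℤ_{12n}` whose differences of distinct elements cover
every element of `ℤ_{12n} \ {0, 3n, 4n, 6n, 8n, 9n}` exactly once, and cover no element
of `{0, 3n, 4n, 6n, 8n, 9n}`. -/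
theorem difference_family_Z12n (n : ℕ) (hn : 2 ≤ n) (heven : Even n) :
    ∃ B : Fin (2 * n - 1) → Finset (ZMod (12 * n)),
      (∀ i, (B i).card = 3) ∧
      (∀ g : ZMod (12 * n),
        g ∉ ({0, ((3 * n : ℕ) : ZMod (12 * n)), ((4 * n : ℕ) : ZMod (12 * n)),
              ((6 * n : ℕ) : ZMod (12 * n)), ((8 * n : ℕ) : ZMod (12 * n)),
              ((9 * n : ℕ) : ZMod (12 * n))} : Set (ZMod (12 * n))) →
        ∃! p : Fin (2 * n - 1) × ZMod (12 * n) × ZMod (12 * n),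
          p.2.1 ∈ B p.1 ∧ p.2.2 ∈ B p.1 ∧ p.2.1 ≠ p.2.2 ∧ p.2.1 - p.2.2 = g) ∧
      (∀ g ∈ ({0, ((3 * n : ℕ) : ZMod (12 * n)), ((4 * n : ℕ) : ZMod (12 * n)),
              ((6 * n : ℕ) : ZMod (12 * n)), ((8 * n : ℕ) : ZMod (12 * n)),
              ((9 * n : ℕ) : ZMod (12 * n))} : Set (ZMod (12 * n))),
        ¬ ∃ p : Fin (2 * n - 1) × ZMod (12 * n) × ZMod (12 * n),
          p.2.1 ∈ B p.1 ∧ p.2.2 ∈ B p.1 ∧ p.2.1 ≠ p.2.2 ∧ p.2.1 - p.2.2 = g) := by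
  haveI : NeZero (12*n) := ⟨by omega⟩
  have hgval : ∀ g : ZMod (12*n), ((g.val : ℕ) : ZMod (12*n)) = g := by
    intro g
    have := ZMod.natCast_val (R := ZMod (12*n)) g
    rwa [ZMod.cast_id] at this
  refine ⟨fun i => dblock n i.1, fun i => dblock_card hn i.isLt, ?_, ?_⟩
  · intro g hg
    have hv : g.val < 12*n := ZMod.val_lt g
    have hv1 : g.val ≠ 0 := by
      intro h
      refine hg ?_
      have hgz : g = 0 := by rw [← hgval g, h]; simp
      rw [hgz]; exact Set.mem_insert _ _
    have hv3 : g.val ≠ 3*n := by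
      intro h
      refine hg ?_
      have : g = ((3*n : ℕ) : ZMod (12*n)) := by rw [← hgval g, h]
      rw [this]; simp
    have hv4 : g.val ≠ 4*n := by
      intro h
      refine hg ?_
      have : g = ((4*n : ℕ) : ZMod (12*n)) := by rw [← hgval g, h]
      rw [this]; simp
    have hv6 : g.val ≠ 6*n := by
      intro h
      refine hg ?_
      have : g = ((6*n : ℕ) : ZMod (12*n)) := by rw [← hgval g, h]
      rw [this]; simp
    have hv8 : g.val ≠ 8*n := by
      intro h
      refine hg ?_
      have : g = ((8*n : ℕ) : ZMod (12*n)) := by rw [← hgval g, h]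
      rw [this]; simp
    have hv9 : g.val ≠ 9*n := by
      intro h
      refine hg ?_
      have : g = ((9*n : ℕ) : ZMod (12*n)) := by rw [← hgval g, h]
      rw [this]; simp
    obtain ⟨i0, j0, hi0, hj0, hd0⟩ :=
      dval_cover n hn (g := g.val) (by omega) hv hv3 hv4 hv6 hv8 hv9
    obtain ⟨m1, m2, mne, mdiff⟩ := dpair_spec (n := n) hn hi0 hj0
    refine ⟨(⟨i0, hi0⟩, dpair n i0 j0), ⟨m1, m2, mne, by rw [mdiff, hd0, hgval]⟩, ?_⟩
    rintro ⟨qi, qx, qy⟩ ⟨hx, hy, hne, hdiff⟩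
    obtain ⟨j', hj', hPeq⟩ := dblock_decomp (n := n) (i := qi.1) hx hy hne
    obtain ⟨_, _, _, mdiff'⟩ := dpair_spec (n := n) hn qi.isLt hj'
    have hxy : qx - qy = ((dval n qi.1 j' : ℕ) : ZMod (12*n)) := by
      have hq1 : qx = (dpair n qi.1 j').1 := congrArg Prod.fst hPeq
      have hq2 : qy = (dpair n qi.1 j').2 := congrArg Prod.snd hPeq
      rw [hq1, hq2, mdiff']
    have hcast : ((dval n qi.1 j' : ℕ) : ZMod (12*n)) = ((dval n i0 j0 : ℕ) : ZMod (12*n)) := by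
      rw [← hxy, hdiff, hd0, hgval]
    have hq1 := (dval_range n qi.1 j' hn qi.isLt hj').2.1
    have hq2 := (dval_range n i0 j0 hn hi0 hj0).2.1
    have heq : dval n qi.1 j' = dval n i0 j0 := cast_inj_aux hn hq1 hq2 hcast
    obtain ⟨hii, hjj⟩ := dval_inj n hn qi.isLt hi0 hj' hj0 heq
    have hqi : qi = ⟨i0, hi0⟩ := Fin.ext hii
    have hpair : (qx, qy) = dpair n i0 j0 := by rw [hPeq, hii, hjj]
    rw [Prod.mk.injEq]
    exact ⟨hqi, hpair⟩
  · rintro g hg ⟨⟨qi, qx, qy⟩, hx, hy, hne, hdiff⟩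
    obtain ⟨j', hj', hPeq⟩ := dblock_decomp (n := n) (i := qi.1) hx hy hne
    obtain ⟨_, _, _, mdiff'⟩ := dpair_spec (n := n) hn qi.isLt hj'
    have hxy : qx - qy = ((dval n qi.1 j' : ℕ) : ZMod (12*n)) := by
      have hq1 : qx = (dpair n qi.1 j').1 := congrArg Prod.fst hPeq
      have hq2 : qy = (dpair n qi.1 j').2 := congrArg Prod.snd hPeq
      rw [hq1, hq2, mdiff']
    have hgv : g = ((dval n qi.1 j' : ℕ) : ZMod (12*n)) := by rw [← hdiff, hxy]
    obtain ⟨r1, r2, r3, r4, r6, r8, r9⟩ := dval_range n qi.1 j' hn qi.isLt hj'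
    have hvv : g.val = dval n qi.1 j' := by
      rw [hgv, ZMod.val_cast_of_lt r2]
    simp only [Set.mem_insert_iff, Set.mem_singleton_iff] at hg
    rcases hg with h | h | h | h | h | h
    · rw [h, ZMod.val_zero] at hvv; omega
    · rw [h, ZMod.val_cast_of_lt (by omega)] at hvv; omega
    · rw [h, ZMod.val_cast_of_lt (by omega)] at hvv; omega
    · rw [h, ZMod.val_cast_of_lt (by omega)] at hvv; omega
    · rw [h, ZMod.val_cast_of_lt (by omega)] at hvv; omega
    · rw [h, ZMod.val_cast_of_lt (by omega)] at hvv; omega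
end

section
/- (Necessary direction of Skolem parity condition) If a k-extended Skolem sequence of order n exists, then k is odd when n ≡ 0, 1 (mod 4) and k is even when n ≡ 2, 3 (mod 4). -/
/-- A `k`-extended Skolem sequence of order `n`: a sequence `s₁, …, sₙ` such that the
pairs `{sᵢ, sᵢ + i}` partition `{1, …, 2n+1} \ {k}`. -/
def IsExtendedSkolem (k n : ℕ) : Prop :=
  ∃ s : ℕ → ℕ,
    (Finset.Icc 1 n).biUnion (fun i => {s i, s i + i}) = (Finset.Icc 1 (2 * n + 1)).erase k

lemma gauss_icc (m : ℕ) : 2 * ∑ i ∈ Finset.Icc 1 m, i = m * (m + 1) := by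
  induction m with
  | zero => simp
  | succ m ih =>
    rw [Finset.sum_Icc_succ_top (by omega), mul_add, ih]
    ring

/-- Necessary parity condition: if a `k`-extended Skolem sequence of order `n` exists,
then `k` is odd when `n ≡ 0, 1 (mod 4)` and `k` is even when `n ≡ 2, 3 (mod 4)`. -/
theorem extended_skolem_parity (k n : ℕ) (hn : 1 ≤ n) (hk1 : 1 ≤ k) (hk2 : k ≤ 2 * n + 1)
    (h : IsExtendedSkolem k n) :
    ((n % 4 = 0 ∨ n % 4 = 1) → Odd k) ∧ ((n % 4 = 2 ∨ n % 4 = 3) → Even k) := by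
  obtain ⟨s, hs⟩ := h
  set P : ℕ → Finset ℕ := fun i => {s i, s i + i} with hP
  have hk_mem : k ∈ Finset.Icc 1 (2 * n + 1) := by simp [Finset.mem_Icc]; omega
  have hcardP : ∀ i, 1 ≤ i → (P i).card = 2 := by
    intro i hi
    have : s i ≠ s i + i := by omega
    simp [hP, Finset.card_pair this]
  have hcardPle : ∀ i, (P i).card ≤ 2 := by
    intro i
    calc (P i).card ≤ ({s i + i} : Finset ℕ).card + 1 := Finset.card_insert_le _ _
    _ ≤ 2 := by simp
  have hcard : ((Finset.Icc 1 n).biUnion P).card = 2 * n := by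
    rw [hs, Finset.card_erase_of_mem hk_mem, Nat.card_Icc]
    omega
  -- disjointness
  have hdisj : (↑(Finset.Icc 1 n) : Set ℕ).PairwiseDisjoint P := by
    intro i hi j hj hij
    by_contra hnd
    simp only [Finset.coe_mem, Finset.mem_coe, Finset.mem_Icc] at hi hj
    set rest := ((Finset.Icc 1 n).erase i).erase j with hrest
    have hjmem : j ∈ (Finset.Icc 1 n).erase i := by
      rw [Finset.mem_erase]
      exact ⟨fun hji => hij hji.symm, by simp [Finset.mem_Icc]; omega⟩
    have hsplit : Finset.Icc 1 n = insert i (insert j rest) := by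
      rw [hrest, Finset.insert_erase hjmem, Finset.insert_erase (by simp [Finset.mem_Icc]; omega)]
    have hrestcard : rest.card = n - 2 := by
      rw [hrest, Finset.card_erase_of_mem hjmem,
        Finset.card_erase_of_mem (by simp [Finset.mem_Icc]; omega), Nat.card_Icc]
      omega
    have hrestsum : (rest.biUnion P).card ≤ 2 * (n - 2) := by
      calc (rest.biUnion P).card ≤ ∑ x ∈ rest, (P x).card := Finset.card_biUnion_le
      _ ≤ ∑ _x ∈ rest, 2 := Finset.sum_le_sum fun x _ => hcardPle x
      _ = 2 * (n - 2) := by rw [Finset.sum_const, hrestcard, smul_eq_mul]; ring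
    have hij3 : ((P i) ∪ (P j)).card ≤ 3 := by
      have h1 := Finset.card_union_add_card_inter (P i) (P j)
      have h2 : 1 ≤ ((P i) ∩ (P j)).card := by
        rw [Nat.one_le_iff_ne_zero, Ne, Finset.card_eq_zero, ← Finset.disjoint_iff_inter_eq_empty]
        exact hnd
      have h3 := hcardP i hi.1
      have h4 := hcardP j hj.1
      omega
    have : ((Finset.Icc 1 n).biUnion P).card ≤ 2 * n - 1 := by
      rw [hsplit, Finset.biUnion_insert, Finset.biUnion_insert, ← Finset.union_assoc]
      calc ((P i ∪ P j) ∪ rest.biUnion P).card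
          ≤ (P i ∪ P j).card + (rest.biUnion P).card := Finset.card_union_le _ _
        _ ≤ 2 * n - 1 := by
            have hn2 : 2 ≤ n := by omega
            omega
    omega
  -- the sum identity
  have hsum : ∑ x ∈ (Finset.Icc 1 (2 * n + 1)).erase k, x
      = ∑ i ∈ Finset.Icc 1 n, (s i + (s i + i)) := by
    rw [← hs, Finset.sum_biUnion hdisj]
    refine Finset.sum_congr rfl fun i hi => ?_
    rw [Finset.mem_Icc] at hi
    exact Finset.sum_pair (by omega : s i ≠ s i + i)
  have htotal : k + ∑ x ∈ (Finset.Icc 1 (2 * n + 1)).erase k, x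
      = ∑ x ∈ Finset.Icc 1 (2 * n + 1), x := Finset.add_sum_erase _ (fun x => x) hk_mem
  set A := ∑ i ∈ Finset.Icc 1 n, i with hA
  set B := ∑ x ∈ Finset.Icc 1 (2 * n + 1), x with hB
  set S := ∑ i ∈ Finset.Icc 1 n, s i with hS
  have hsum2 : ∑ i ∈ Finset.Icc 1 n, (s i + (s i + i)) = 2 * S + A := by
    rw [Finset.sum_add_distrib, Finset.sum_add_distrib, hS, hA]
    ring
  have key : k + 2 * S + A = B := by rw [← htotal, hsum, hsum2]; ring
  have hA2 : 2 * A = n * (n + 1) := gauss_icc n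
  have hB2 : 2 * B = (2 * n + 1) * (2 * n + 2) := gauss_icc (2 * n + 1)
  -- compute A % 2 from n % 4
  have hAmod : (n * (n + 1)) % 4 = (n % 4 * (n % 4 + 1)) % 4 := by
    conv_lhs => rw [Nat.mul_mod, Nat.add_mod n 1 4]
    simp [Nat.mul_mod]
  -- compute B % 2
  have hBval : B = (2 * n + 1) * (n + 1) := by
    have : (2 * n + 1) * (2 * n + 2) = 2 * ((2 * n + 1) * (n + 1)) := by ring
    omega
  have hBmod : B % 2 = (n + 1) % 2 := by
    rw [hBval, Nat.mul_mod]
    have : (2 * n + 1) % 2 = 1 := by omega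
    rw [this]
    simp [Nat.mod_mod_of_dvd]
  constructor
  · rintro (h0 | h1)
    · rw [h0] at hAmod
      rw [Nat.odd_iff]
      omega
    · rw [h1] at hAmod
      rw [Nat.odd_iff]
      omega
  · rintro (h2 | h3)
    · rw [h2] at hAmod
      rw [Nat.even_iff]
      omega
    · rw [h3] at hAmod
      rw [Nat.even_iff]
      omega
end

section
/- In an f-pyramidal STS(v) with point set F ∪ G (G acting by right translation on itself, fixing F pointwise), for each fixed point ∞_i the third point x_i of the block through ∞_i and 0 is an involution of G, and the map ∞_i ↦ x_i is a bijection between F and the set of involutions of G; in particular G has exactly f involutions. -/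
/-- `B` is the block set of a Steiner triple system on `V`: every block has 3 points and
any two distinct points lie in exactly one block. -/
def IsSTS {V : Type*} (B : Set (Finset V)) : Prop :=
  (∀ b ∈ B, b.card = 3) ∧ ∀ x y : V, x ≠ y → ∃! b, b ∈ B ∧ x ∈ b ∧ y ∈ b

lemma exists_third {α : Type*} [DecidableEq α] {s : Finset α} (h3 : s.card = 3)
    {a b : α} (ha : a ∈ s) (hb : b ∈ s) (hab : a ≠ b) :
    ∃ c, c ≠ a ∧ c ≠ b ∧ s = {a, b, c} := by
  have hsub : ({a, b} : Finset α) ⊆ s := by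
    simp [Finset.insert_subset_iff, ha, hb]
  have hcard : ({a, b} : Finset α).card = 2 := by
    rw [Finset.card_insert_of_notMem (by simpa using hab), Finset.card_singleton]
  have hd : (s \ {a, b}).card = 1 := by
    rw [Finset.card_sdiff_of_subset hsub, h3, hcard]
  obtain ⟨c, hc⟩ := Finset.card_eq_one.mp hd
  have hcmem : c ∈ s \ ({a, b} : Finset α) := hc ▸ Finset.mem_singleton_self c
  rw [Finset.mem_sdiff] at hcmem
  have hca : c ≠ a := fun h => hcmem.2 (by simp [h])
  have hcb : c ≠ b := fun h => hcmem.2 (by simp [h])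
  refine ⟨c, hca, hcb, ?_⟩
  have hcard3 : ({a, b, c} : Finset α).card = 3 :=
    Finset.card_eq_three.mpr ⟨a, b, c, hab, hca.symm, hcb.symm, rfl⟩
  refine (Finset.eq_of_subset_of_card_le ?_ (by rw [h3, hcard3])).symm
  intro x hx
  simp only [Finset.mem_insert, Finset.mem_singleton] at hx
  rcases hx with rfl | rfl | rfl
  · exact ha
  · exact hb
  · exact hcmem.1

/-- In an `f`-pyramidal STS with point set `F ∪ G` (`G` acting on itself by right
translation and fixing the `f` points of `F`, which are exactly the fixed points),
the block through `∞ᵢ` and `0` is `{∞ᵢ, 0, xᵢ}` where `xᵢ` is an involution of `G`,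
and `∞ᵢ ↦ xᵢ` is a bijection between `F` and the set of involutions of `G`. -/
theorem pyramidal_sts_involutions
    {G : Type*} [AddGroup G] [Fintype G] [DecidableEq G] (f : ℕ)
    (B : Set (Finset (Sum (Fin f) G))) (hSTS : IsSTS B)
    (hinv : ∀ (g : G), ∀ b ∈ B, b.image (Sum.map id (· + g)) ∈ B)
    (hfix : {p : Sum (Fin f) G | ∀ g : G, Sum.map id (· + g) p = p} = Set.range Sum.inl) :
    ∃ x : Fin f → G,
      (∀ i, ({Sum.inl i, Sum.inr 0, Sum.inr (x i)} : Finset (Sum (Fin f) G)) ∈ B) ∧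
      (∀ i, x i + x i = 0 ∧ x i ≠ 0) ∧
      Function.Injective x ∧
      (∀ g : G, g + g = 0 → g ≠ 0 → ∃ i, x i = g) := by
  -- G is nontrivial
  have hG : ∃ g : G, g ≠ 0 := by
    have : (Sum.inr 0 : Sum (Fin f) G) ∉ Set.range (Sum.inl : Fin f → Sum (Fin f) G) := by
      rintro ⟨j, h⟩; exact Sum.inl_ne_inr h
    rw [← hfix] at this
    simp only [Set.mem_setOf_eq, not_forall] at this
    obtain ⟨g, hg⟩ := this
    refine ⟨g, fun h => hg ?_⟩
    simp [h]
  obtain ⟨g₀, hg₀⟩ := hG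
  have key : ∀ i : Fin f, ∃ t : G,
      (({Sum.inl i, Sum.inr 0, Sum.inr t} : Finset (Sum (Fin f) G)) ∈ B) ∧
      t + t = 0 ∧ t ≠ 0 := by
    intro i
    obtain ⟨b, ⟨hbB, hib, h0b⟩, _⟩ := hSTS.2 (Sum.inl i) (Sum.inr 0) (by simp)
    obtain ⟨c, hci, hc0, hbeq⟩ := exists_third (hSTS.1 b hbB) hib h0b (by simp)
    match c with
    | Sum.inl j =>
      exfalso
      -- translate by g₀: block through inl i, inl j is unique
      have hij : (Sum.inl i : Sum (Fin f) G) ≠ Sum.inl j := fun h => hci h.symm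
      have hb' : b.image (Sum.map id (· + g₀)) ∈ B := hinv g₀ b hbB
      have himg : b.image (Sum.map id (· + g₀)) =
          {Sum.inl i, Sum.inr g₀, Sum.inl j} := by
        rw [hbeq]
        simp [Finset.image_insert]
      have huniq := (hSTS.2 (Sum.inl i) (Sum.inl j) hij).unique
        ⟨hb', by rw [himg]; simp, by rw [himg]; simp⟩
        ⟨hbB, hib, by rw [hbeq]; simp⟩
      -- so translated block = b, hence inr g₀ ∈ b
      have : (Sum.inr g₀ : Sum (Fin f) G) ∈ b := by
        rw [← huniq, himg]; simp
      rw [hbeq] at this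
      simp only [Finset.mem_insert, Finset.mem_singleton] at this
      rcases this with h | h | h
      · exact Sum.inr_ne_inl h
      · exact hg₀ (Sum.inr.inj h)
      · exact Sum.inr_ne_inl h
    | Sum.inr t =>
      have ht0 : t ≠ 0 := fun h => hc0 (by rw [h])
      refine ⟨t, hbeq ▸ hbB, ?_, ht0⟩
      have hb' : b.image (Sum.map id (· + t)) ∈ B := hinv t b hbB
      have himg : b.image (Sum.map id (· + t)) =
          {Sum.inl i, Sum.inr t, Sum.inr (t + t)} := by
        rw [hbeq]
        simp [Finset.image_insert]
      have hit : (Sum.inl i : Sum (Fin f) G) ≠ Sum.inr t := Sum.inl_ne_inr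
      have huniq := (hSTS.2 (Sum.inl i) (Sum.inr t) hit).unique
        ⟨hb', by rw [himg]; simp, by rw [himg]; simp⟩
        ⟨hbB, hib, by rw [hbeq]; simp⟩
      have : (Sum.inr (t + t) : Sum (Fin f) G) ∈ b := by
        rw [← huniq, himg]; simp
      rw [hbeq] at this
      simp only [Finset.mem_insert, Finset.mem_singleton] at this
      rcases this with h | h | h
      · exact absurd h Sum.inr_ne_inl
      · exact Sum.inr.inj h
      · exact absurd (add_right_cancel (a := t) (by rw [Sum.inr.inj h, zero_add]) : t = 0) ht0
  choose x hx1 hx2 hx3 using key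
  refine ⟨x, hx1, fun i => ⟨hx2 i, hx3 i⟩, ?_, ?_⟩
  · intro i j hij
    have h0x : (Sum.inr 0 : Sum (Fin f) G) ≠ Sum.inr (x i) :=
      fun h => hx3 i (Sum.inr.inj h).symm
    have huniq := (hSTS.2 (Sum.inr 0) (Sum.inr (x i)) h0x).unique
      ⟨hx1 i, by simp, by simp⟩
      ⟨hij ▸ hx1 j, by simp, by simp⟩
    have : (Sum.inl i : Sum (Fin f) G) ∈
        ({Sum.inl j, Sum.inr 0, Sum.inr (x j)} : Finset (Sum (Fin f) G)) := by
      rw [← hij, ← huniq]; simp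
    simp only [Finset.mem_insert, Finset.mem_singleton] at this
    rcases this with h | h | h
    · exact Sum.inl.inj h
    · exact absurd h Sum.inl_ne_inr
    · exact absurd h Sum.inl_ne_inr
  · intro g hg2 hg0
    have h0g : (Sum.inr 0 : Sum (Fin f) G) ≠ Sum.inr g := fun h => hg0 (Sum.inr.inj h).symm
    obtain ⟨b, ⟨hbB, h0b, hgb⟩, _⟩ := hSTS.2 (Sum.inr 0) (Sum.inr g) h0g
    obtain ⟨c, hc0, hcg, hbeq⟩ := exists_third (hSTS.1 b hbB) h0b hgb h0g
    have hb' : b.image (Sum.map id (· + g)) ∈ B := hinv g b hbB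
    have himg : b.image (Sum.map id (· + g)) =
        {Sum.inr g, Sum.inr 0, Sum.map id (· + g) c} := by
      rw [hbeq]
      simp [Finset.image_insert, hg2]
    have huniq := (hSTS.2 (Sum.inr 0) (Sum.inr g) h0g).unique
      ⟨hb', by rw [himg]; simp, by rw [himg]; simp⟩ ⟨hbB, h0b, hgb⟩
    have hcmem : Sum.map id (· + g) c ∈ b := by
      rw [← huniq, himg]; simp
    match c, hc0, hcg, hbeq with
    | Sum.inr h, hc0, hcg, hbeq =>
      exfalso
      rw [hbeq] at hcmem
      simp only [Sum.map_inr, id, Finset.mem_insert, Finset.mem_singleton,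
        Sum.inr.injEq] at hcmem
      have hneg : -g = g := neg_eq_of_add_eq_zero_left hg2
      rcases hcmem with h' | h' | h'
      · -- h + g = 0, so h = -g = g, contradicting c ≠ inr g
        have : h = -g := eq_neg_of_add_eq_zero_left h'
        exact hcg (by rw [this, hneg])
      · -- h + g = g, so h = 0
        have : h = 0 := by
          have h'' : h + g = 0 + g := by rw [h', zero_add]
          exact add_right_cancel h''
        exact hc0 (by rw [this])
      · -- h + g = h, so g = 0
        have : g = 0 := by
          have h'' : h + g = h + 0 := by rw [h', add_zero]
          exact add_left_cancel h''
        exact hg0 this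
    | Sum.inl j, hc0, hcg, hbeq =>
      refine ⟨j, ?_⟩
      have hj0 : (Sum.inl j : Sum (Fin f) G) ≠ Sum.inr 0 := Sum.inl_ne_inr
      have huniq2 := (hSTS.2 (Sum.inl j) (Sum.inr 0) hj0).unique
        ⟨hx1 j, by simp, by simp⟩
        ⟨hbB, by rw [hbeq]; simp, h0b⟩
      have : (Sum.inr (x j) : Sum (Fin f) G) ∈ b := by
        rw [← huniq2]; simp
      rw [hbeq] at this
      simp only [Finset.mem_insert, Finset.mem_singleton] at this
      rcases this with h | h | h
      · exact absurd (Sum.inr.inj h) (hx3 j)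
      · exact Sum.inr.inj h
      · exact absurd h Sum.inr_ne_inl
end
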